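/- For every θ ≥ 1/4, the function R(z) = (1 + (1-2θ)z + (1/2 - 2θ + θ²)z²)/(1 - θz)² satisfies |R(z)| ≤ 1 for all z ∈ ℂ with Re z ≤ 0 (A-stability). -/

import Mathlib

/-- A-stability: for every θ ≥ 1/4, the DIRK stability function satisfies
|R(z)| ≤ 1 for all z in the closed left half-plane. -/
theorem dirk_stability_A_stable
    (θ : ℝ) (hθ : 1/4 ≤ θ) (R : ℂ → ℂ)
    (hR : ∀ z : ℂ, z.re ≤ 0 →
      R z = (1 + (1 - 2*(θ:ℂ)) * z + (1/2 - 2*(θ:ℂ) + (θ:ℂ)^2) * z^2)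
        / (1 - (θ:ℂ) * z)^2) :
    ∀ z : ℂ, z.re ≤ 0 → ‖R z‖ ≤ 1 := by
  intro z hz
  rw [hR z hz]
  set x := z.re with hx
  set y := z.im with hy
  have hθ0 : (0:ℝ) < θ := by linarith
  have hden : (1 - (θ:ℂ) * z) ≠ 0 := by
    intro h
    have := congrArg Complex.re h
    simp [Complex.sub_re, Complex.mul_re] at this
    nlinarith [sq_nonneg x]
  have hden2 : ((1 - (θ:ℂ) * z)^2) ≠ 0 := pow_ne_zero _ hden
  rw [norm_div, div_le_one (by simpa using (norm_pos_iff.mpr hden2))]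
  have key : Complex.normSq (1 + (1 - 2*(θ:ℂ)) * z + (1/2 - 2*(θ:ℂ) + (θ:ℂ)^2) * z^2)
      ≤ Complex.normSq ((1 - (θ:ℂ) * z)^2) := by
    have hre2 : (z^2).re = x^2 - y^2 := by
      simp [sq, Complex.mul_re]; rfl
    have him2 : (z^2).im = x*y + y*x := by
      simp [sq, Complex.mul_im]; rfl
    simp only [map_pow Complex.normSq, Complex.normSq_apply,
      Complex.add_re, Complex.add_im, Complex.one_re, Complex.one_im,
      Complex.sub_re, Complex.sub_im, Complex.mul_re, Complex.mul_im,
      ← Complex.ofReal_pow, Complex.ofReal_re, Complex.ofReal_im, Complex.div_re, Complex.div_im,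
      Complex.re_ofNat, Complex.im_ofNat, hre2, him2]
    ring_nf
    nlinarith [mul_nonneg (mul_nonneg (by linarith : (0:ℝ) ≤ 4*θ-1) (sq_nonneg (θ-1/2))) (sq_nonneg (x^2+y^2)),
      mul_nonneg (mul_nonneg (by nlinarith [sq_nonneg (10*θ-3)] : (0:ℝ) ≤ 10*θ^2-6*θ+1) (by linarith : (0:ℝ) ≤ -x)) (by positivity : (0:ℝ) ≤ x^2+y^2),
      mul_nonneg (by linarith : (0:ℝ) ≤ 4*θ-1) (sq_nonneg x),
      hz, sq_nonneg y]
  rw [Complex.norm_def, Complex.norm_def]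
  exact Real.sqrt_le_sqrt key
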